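/- Let Z be a topologically ordered *-space, S₀(Z) ⊆ S_*(Z) a family of seminorms generating the topology of Z, E a topological VE-space over Z such that for every p ∈ S₀(Z) the quotient normed VE-space E_p := E/Ĩ_p (with norm ‖x + Ĩ_p‖ = p̃(x)) is barrelled, and F a topological VE-space over Z. Then every adjointable linear operator T : E → F is S₀(Z)-bounded: for every p ∈ S₀(Z) there exists C ≥ 0 such that p̃(Tx) ≤ C p̃(x) for all x ∈ E. -/

import Mathlib

open scoped ComplexConjugate Topology

/-- The data of an ordered `*`-space structure on a complex vector space `Z`:
a conjugate-linear involution and a strict convex cone of selfadjoint elements. -/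
structure OrderedStarData (Z : Type*) [AddCommGroup Z] [Module ℂ Z] where
  star : Z → Z
  star_add : ∀ x y : Z, star (x + y) = star x + star y
  star_smul : ∀ (c : ℂ) (x : Z), star (c • x) = (starRingEnd ℂ) c • star x
  star_star : ∀ x : Z, star (star x) = x
  cone : Set Z
  cone_zero : (0 : Z) ∈ cone
  cone_add : ∀ x ∈ cone, ∀ y ∈ cone, x + y ∈ cone
  cone_smul : ∀ r : ℝ, 0 ≤ r → ∀ x ∈ cone, (r : ℂ) • x ∈ cone
  cone_strict : ∀ x ∈ cone, -x ∈ cone → x = 0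
  cone_star : ∀ x ∈ cone, star x = x

namespace OrderedStarData

variable {Z : Type*} [AddCommGroup Z] [Module ℂ Z]

/-- A seminorm is increasing when `0 ≤ x ≤ y` implies `p x ≤ p y`. -/
def Increasing (D : OrderedStarData Z) (p : Seminorm ℂ Z) : Prop :=
  ∀ x y : Z, x ∈ D.cone → y - x ∈ D.cone → p x ≤ p y

/-- A `*`-seminorm: `p (z*) = p z`. -/
def StarSeminorm (D : OrderedStarData Z) (p : Seminorm ℂ Z) : Prop :=
  ∀ z : Z, p (D.star z) = p z

end OrderedStarData

/-- A topologically ordered `*`-space: an ordered `*`-space with a Hausdorff locally convex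
topology generated by a family of increasing seminorms, continuous involution and closed cone. -/
structure TopOrderedStarSpace (Z : Type*) [AddCommGroup Z] [Module ℂ Z]
    [TopologicalSpace Z] extends OrderedStarData Z where
  t2 : T2Space Z
  star_continuous : Continuous star
  cone_closed : IsClosed cone
  seminorms_generate : ∃ (ι : Type) (hι : Nonempty ι) (q : ι → Seminorm ℂ Z),
      (∀ i, ∀ x y : Z, x ∈ cone → y - x ∈ cone → q i x ≤ q i y) ∧
      (letI := hι; WithSeminorms q)

namespace TopOrderedStarSpace

variable {Z : Type*} [AddCommGroup Z] [Module ℂ Z] [TopologicalSpace Z]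

/-- Membership in `S_*(Z)`, the set of continuous increasing `*`-seminorms. -/
def MemSStar (D : TopOrderedStarSpace Z) (p : Seminorm ℂ Z) : Prop :=
  Continuous ⇑p ∧ D.toOrderedStarData.Increasing p ∧ D.toOrderedStarData.StarSeminorm p

end TopOrderedStarSpace

/-- The topology of `Z` is generated by the family of seminorms `S`. -/
def GeneratesTopology {Z : Type*} [AddCommGroup Z] [Module ℂ Z] [TopologicalSpace Z]
    (S : Set (Seminorm ℂ Z)) : Prop :=
  ∃ h : Nonempty ↥S, letI := h; WithSeminorms (fun p : ↥S => (p : Seminorm ℂ Z))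

/-- A `Z`-valued gramian (vector valued inner product) on `E`, making `E` a VE-space over `Z`. -/
structure Gramian {Z : Type*} [AddCommGroup Z] [Module ℂ Z] (D : OrderedStarData Z)
    (E : Type*) [AddCommGroup E] [Module ℂ E] where
  inner : E → E → Z
  inner_self_mem : ∀ x : E, inner x x ∈ D.cone
  inner_self_eq_zero : ∀ x : E, inner x x = 0 → x = 0
  inner_herm : ∀ x y : E, inner x y = D.star (inner y x)
  inner_add_right : ∀ x y₁ y₂ : E, inner x (y₁ + y₂) = inner x y₁ + inner x y₂
  inner_smul_right : ∀ (a : ℂ) (x y : E), inner x (a • y) = a • inner x y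

namespace Gramian

variable {Z : Type*} [AddCommGroup Z] [Module ℂ Z] {D : OrderedStarData Z}
  {E : Type*} [AddCommGroup E] [Module ℂ E]
  {F : Type*} [AddCommGroup F] [Module ℂ F]

/-- The seminorm `p̃ x = p ([x,x])^{1/2}` induced on a VE-space by a seminorm on `Z`. -/
noncomputable def tilde (B : Gramian D E) (p : Seminorm ℂ Z) (x : E) : ℝ :=
  Real.sqrt (p (B.inner x x))

/-- `S` is an adjoint of `T` : `[Tx, y] = [x, Sy]`. -/
def IsAdjoint (BE : Gramian D E) (BF : Gramian D F) (T : E →ₗ[ℂ] F) (S : F →ₗ[ℂ] E) : Prop :=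
  ∀ (x : E) (y : F), BF.inner (T x) y = BE.inner x (S y)

/-- `T` is adjointable. -/
def Adjointable (BE : Gramian D E) (BF : Gramian D F) (T : E →ₗ[ℂ] F) : Prop :=
  ∃ S : F →ₗ[ℂ] E, BE.IsAdjoint BF T S

/-- `T` is bounded for the seminorm `p` : `p̃ (Tx) ≤ C p̃ x`. -/
def BoundedFor (BE : Gramian D E) (BF : Gramian D F) (T : E →ₗ[ℂ] F) (p : Seminorm ℂ Z) : Prop :=
  ∃ C : ℝ, 0 ≤ C ∧ ∀ x : E, BF.tilde p (T x) ≤ C * BE.tilde p x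

/-- The operator seminorm `p̄ T`, the infimum of the admissible bounds. -/
noncomputable def opSeminorm (BE : Gramian D E) (BF : Gramian D F) (T : E →ₗ[ℂ] F)
    (p : Seminorm ℂ Z) : ℝ :=
  sInf {C : ℝ | 0 ≤ C ∧ ∀ x : E, BF.tilde p (T x) ≤ C * BE.tilde p x}

/-- The topology of `E` is the one of a topological VE-space: it is generated by the
seminorms `p̃` for `p ∈ S`. -/
def IsVETopology [TopologicalSpace E] (B : Gramian D E) (S : Set (Seminorm ℂ Z)) : Prop :=
  ∃ h : Nonempty ↥S, letI := h;
    ∃ q : ↥S → Seminorm ℂ E, (∀ (p : ↥S) (x : E), q p x = B.tilde p.1 x) ∧ WithSeminorms q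

end Gramian

/-- A barrel: a closed, absorbent, balanced, convex set. -/
def IsBarrel {E : Type*} [AddCommGroup E] [Module ℂ E] [TopologicalSpace E] (s : Set E) : Prop :=
  IsClosed s ∧ Absorbent ℂ s ∧ Balanced ℂ s ∧ Convex ℝ s

/-- A (complex) topological vector space is barrelled if every barrel is a neighbourhood of `0`. -/
def BarrelledSp (E : Type*) [AddCommGroup E] [Module ℂ E] [TopologicalSpace E] : Prop :=
  ∀ s : Set E, IsBarrel s → s ∈ 𝓝 (0 : E)

/-- A barrel with respect to the topology of a norm function `N`. -/
def IsBarrelWrtNorm {V : Type*} [AddCommGroup V] [Module ℂ V] (N : V → ℝ) (s : Set V) : Prop :=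
  (∀ x : V, (∀ ε : ℝ, 0 < ε → ∃ y ∈ s, N (x - y) < ε) → x ∈ s) ∧
  Absorbent ℂ s ∧ Balanced ℂ s ∧ Convex ℝ s

/-- Barrelledness with respect to the topology of a norm function `N`. -/
def BarrelledWrtNorm {V : Type*} [AddCommGroup V] [Module ℂ V] (N : V → ℝ) : Prop :=
  ∀ s : Set V, IsBarrelWrtNorm N s → ∃ ε : ℝ, 0 < ε ∧ ∀ x : V, N x < ε → x ∈ s

/-- The kernel of a seminorm, as a submodule. -/
def semKer {Z : Type*} [AddCommGroup Z] [Module ℂ Z] (p : Seminorm ℂ Z) : Submodule ℂ Z where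
  carrier := {z | p z = 0}
  add_mem' := by
    intro a b ha hb
    simp only [Set.mem_setOf_eq] at ha hb ⊢
    exact le_antisymm ((map_add_le_add p a b).trans (by simp [ha, hb])) (apply_nonneg p _)
  zero_mem' := map_zero p
  smul_mem' := by
    intro c x hx
    simp only [Set.mem_setOf_eq] at hx ⊢
    rw [map_smul_eq_mul, hx, mul_zero]


section AuxLemmas

private theorem le_of_forall_pos_le_add' {a b : ℝ} (h : ∀ ε : ℝ, 0 < ε → a ≤ b + ε) : a ≤ b := by
  by_contra hc
  push_neg at hc
  have := h ((a - b) / 2) (by linarith)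
  linarith

variable {Z : Type*} [AddCommGroup Z] [Module ℂ Z] {D : OrderedStarData Z}
  {E : Type*} [AddCommGroup E] [Module ℂ E]

namespace Gramian

lemma inner_add_left' (B : Gramian D E) (x₁ x₂ y : E) :
    B.inner (x₁ + x₂) y = B.inner x₁ y + B.inner x₂ y := by
  rw [B.inner_herm, B.inner_add_right, D.star_add, ← B.inner_herm, ← B.inner_herm]

lemma inner_smul_left' (B : Gramian D E) (c : ℂ) (x y : E) :
    B.inner (c • x) y = (starRingEnd ℂ) c • B.inner x y := by
  rw [B.inner_herm, B.inner_smul_right, D.star_smul, ← B.inner_herm]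

lemma star_inner' (B : Gramian D E) (x y : E) :
    D.star (B.inner x y) = B.inner y x := by
  rw [B.inner_herm x y, D.star_star]

lemma inner_expand' (B : Gramian D E) (c d : ℂ) (x y : E) :
    B.inner (c • x + d • y) (c • x + d • y)
      = ((starRingEnd ℂ) c * c) • B.inner x x + ((starRingEnd ℂ) c * d) • B.inner x y
        + ((starRingEnd ℂ) d * c) • B.inner y x + ((starRingEnd ℂ) d * d) • B.inner y y := by
  simp only [B.inner_add_right, B.inner_smul_right, B.inner_add_left', B.inner_smul_left',
    smul_add, smul_smul]
  module

/-- Sum bound: `p([x,y] + [y,x]) ≤ 2 (t² p[x,x] + t⁻² p[y,y])`. -/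
lemma sum_bound (B : Gramian D E) {p : Seminorm ℂ Z} (hinc : D.Increasing p)
    (x y : E) {t : ℝ} (ht : 0 < t) :
    p (B.inner x y + B.inner y x)
      ≤ 2 * (t ^ 2 * p (B.inner x x) + (t⁻¹) ^ 2 * p (B.inner y y)) := by
  set u := B.inner x x with hu
  set v := B.inner y y with hv
  set a := B.inner x y with ha
  set b := B.inner y x with hb
  have hconj : ∀ r : ℝ, (starRingEnd ℂ) ((r : ℝ) : ℂ) = ((r : ℝ) : ℂ) := by
    intro r; simp [Complex.conj_ofReal]
  have htne : (t : ℂ) ≠ 0 := by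
    simpa using ne_of_gt ht
  set wp := B.inner ((t : ℂ) • x + ((t⁻¹ : ℝ) : ℂ) • y) ((t : ℂ) • x + ((t⁻¹ : ℝ) : ℂ) • y)
    with hwp
  set wm := B.inner ((t : ℂ) • x + ((-t⁻¹ : ℝ) : ℂ) • y) ((t : ℂ) • x + ((-t⁻¹ : ℝ) : ℂ) • y)
    with hwm
  have c1 : ((t : ℝ) : ℂ) * ((t : ℝ) : ℂ) = (((t ^ 2 : ℝ)) : ℂ) := by norm_cast; ring
  have c2 : ((t⁻¹ : ℝ) : ℂ) * ((t⁻¹ : ℝ) : ℂ) = (((t⁻¹ ^ 2 : ℝ)) : ℂ) := by norm_cast; ring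
  have c3 : ((t : ℝ) : ℂ) * ((t⁻¹ : ℝ) : ℂ) = 1 := by
    norm_cast; exact mul_inv_cancel₀ (ne_of_gt ht)
  have c4 : ((t⁻¹ : ℝ) : ℂ) * ((t : ℝ) : ℂ) = 1 := by rw [mul_comm]; exact c3
  have c5 : ((t : ℝ) : ℂ) * ((-t⁻¹ : ℝ) : ℂ) = -1 := by
    push_cast
    field_simp
  have c6 : ((-t⁻¹ : ℝ) : ℂ) * ((t : ℝ) : ℂ) = -1 := by rw [mul_comm]; exact c5
  have c7 : ((-t⁻¹ : ℝ) : ℂ) * ((-t⁻¹ : ℝ) : ℂ) = (((t⁻¹ ^ 2 : ℝ)) : ℂ) := by norm_cast; ring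
  have hwp' : wp = (((t ^ 2 : ℝ)) : ℂ) • u + a + b + (((t⁻¹ ^ 2 : ℝ)) : ℂ) • v := by
    rw [hwp, B.inner_expand', hconj, hconj, c1, c2, c3, c4, one_smul, one_smul]
  have hwm' : wm = (((t ^ 2 : ℝ)) : ℂ) • u - a - b + (((t⁻¹ ^ 2 : ℝ)) : ℂ) • v := by
    rw [hwm, B.inner_expand', hconj, hconj, c1, c5, c6, c7, neg_one_smul, neg_one_smul]
    module
  have hwpc : wp ∈ D.cone := B.inner_self_mem _
  have hwmc : wm ∈ D.cone := B.inner_self_mem _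
  have hsum : wp + wm = (((2 * t ^ 2 : ℝ)) : ℂ) • u + (((2 * t⁻¹ ^ 2 : ℝ)) : ℂ) • v := by
    rw [hwp', hwm']
    push_cast
    module
  have hdiff : wp - wm = (2 : ℂ) • (a + b) := by
    rw [hwp', hwm']
    module
  have hpr : p (wp + wm) ≤ 2 * t ^ 2 * p u + 2 * t⁻¹ ^ 2 * p v := by
    rw [hsum]
    refine (map_add_le_add p _ _).trans ?_
    rw [map_smul_eq_mul, map_smul_eq_mul]
    have h1 : ‖(((2 * t ^ 2 : ℝ)) : ℂ)‖ = 2 * t ^ 2 := by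
      rw [Complex.norm_real]
      exact abs_of_nonneg (by positivity)
    have h2 : ‖(((2 * t⁻¹ ^ 2 : ℝ)) : ℂ)‖ = 2 * t⁻¹ ^ 2 := by
      rw [Complex.norm_real]
      exact abs_of_nonneg (by positivity)
    rw [h1, h2]
  have hp1 : p wp ≤ p (wp + wm) := by
    refine hinc _ _ hwpc ?_
    simpa using hwmc
  have hp2 : p wm ≤ p (wp + wm) := by
    refine hinc _ _ hwmc ?_
    simpa [add_sub_cancel_left] using hwpc
  have hd : 2 * p (a + b) = p (wp - wm) := by
    rw [hdiff, map_smul_eq_mul]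
    norm_num
  have : p (wp - wm) ≤ p wp + p wm := by
    simpa [sub_eq_add_neg] using map_add_le_add p wp (-wm)
  nlinarith [hp1, hp2, hpr]

/-- Cauchy–Schwarz-type bound with explicit `t`. -/
lemma cs_t (B : Gramian D E) {p : Seminorm ℂ Z} (hinc : D.Increasing p)
    (x y : E) {t : ℝ} (ht : 0 < t) :
    p (B.inner x y) ≤ 2 * (t ^ 2 * p (B.inner x x) + (t⁻¹) ^ 2 * p (B.inner y y)) := by
  set a := B.inner x y with ha
  set b := B.inner y x with hb
  have h1 := B.sum_bound hinc x y ht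
  have h2 := B.sum_bound hinc x (Complex.I • y) ht
  have e1 : B.inner x (Complex.I • y) = Complex.I • a := by
    rw [B.inner_smul_right]
  have e2 : B.inner (Complex.I • y) x = (starRingEnd ℂ) Complex.I • b := by
    rw [B.inner_smul_left']
  have e3 : B.inner (Complex.I • y) (Complex.I • y) = B.inner y y := by
    rw [B.inner_smul_right, B.inner_smul_left', smul_smul]
    simp [Complex.conj_I]
  rw [e1, e2, e3] at h2
  have e4 : Complex.I • a + (starRingEnd ℂ) Complex.I • b = Complex.I • (a - b) := by
    simp [Complex.conj_I, smul_sub, sub_eq_add_neg, neg_smul]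
  rw [e4, map_smul_eq_mul] at h2
  simp only [Complex.norm_I, one_mul] at h2
  have key : 2 * p a ≤ p (a + b) + p (a - b) := by
    have : (2 : ℂ) • a = (a + b) + (a - b) := by module
    calc 2 * p a = p ((2 : ℂ) • a) := by rw [map_smul_eq_mul]; norm_num
    _ ≤ p (a + b) + p (a - b) := by rw [this]; exact map_add_le_add p _ _
  linarith

/-- Full Cauchy–Schwarz inequality with constant 4. -/
lemma cs (B : Gramian D E) {p : Seminorm ℂ Z} (hinc : D.Increasing p) (x y : E) :
    p (B.inner x y) ≤ 4 * B.tilde p x * B.tilde p y := by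
  set α := B.tilde p x with hα
  set β := B.tilde p y with hβ
  have hα0 : 0 ≤ α := Real.sqrt_nonneg _
  have hβ0 : 0 ≤ β := Real.sqrt_nonneg _
  have hαsq : α ^ 2 = p (B.inner x x) := Real.sq_sqrt (apply_nonneg p _)
  have hβsq : β ^ 2 = p (B.inner y y) := Real.sq_sqrt (apply_nonneg p _)
  refine le_of_forall_pos_le_add' ?_
  intro ε hε
  set δ := min 1 (ε / (4 * (α + β + 1))) with hδdef
  have hδ0 : 0 < δ := lt_min one_pos (by positivity)
  have hδ1 : δ ≤ 1 := min_le_left _ _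
  have hδ2 : δ * (4 * (α + β + 1)) ≤ ε := by
    have := min_le_right 1 (ε / (4 * (α + β + 1)))
    rw [hδdef]
    calc min 1 (ε / (4 * (α + β + 1))) * (4 * (α + β + 1))
        ≤ (ε / (4 * (α + β + 1))) * (4 * (α + β + 1)) := by
          apply mul_le_mul_of_nonneg_right this (by positivity)
      _ = ε := by field_simp
  have hA : 0 < α + δ := by linarith
  have hB : 0 < β + δ := by linarith
  set t := Real.sqrt ((β + δ) / (α + δ)) with htdef
  have ht : 0 < t := Real.sqrt_pos.mpr (by positivity)
  have ht2 : t ^ 2 = (β + δ) / (α + δ) := Real.sq_sqrt (by positivity)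
  have hti2 : (t⁻¹) ^ 2 = (α + δ) / (β + δ) := by
    rw [inv_pow, ht2]
    rw [inv_div]
  have main := B.cs_t hinc x y ht
  rw [ht2, hti2, ← hαsq, ← hβsq] at main
  have h1 : (β + δ) / (α + δ) * α ^ 2 ≤ (β + δ) * α := by
    rw [div_mul_eq_mul_div, div_le_iff₀ hA]
    nlinarith [mul_nonneg hB.le (mul_nonneg hα0 hδ0.le)]
  have h2 : (α + δ) / (β + δ) * β ^ 2 ≤ (α + δ) * β := by
    rw [div_mul_eq_mul_div, div_le_iff₀ hB]
    nlinarith [mul_nonneg hA.le (mul_nonneg hβ0 hδ0.le)]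
  have : p (B.inner x y) ≤ 2 * ((β + δ) * α + (α + δ) * β) := by linarith
  nlinarith

end Gramian

end AuxLemmas

/-- If the quotient normed VE-spaces `E_p`, `p ∈ S₀(Z)`, are barrelled, then
every adjointable operator `T : E → F` is `S₀(Z)`-bounded. -/
theorem statement15 {Z E F : Type*} [AddCommGroup Z] [Module ℂ Z] [TopologicalSpace Z]
    [AddCommGroup E] [Module ℂ E] [TopologicalSpace E]
    [AddCommGroup F] [Module ℂ F] [TopologicalSpace F]
    (D : TopOrderedStarSpace Z)
    (S₀ : Set (Seminorm ℂ Z)) (hS₀ : ∀ p ∈ S₀, D.MemSStar p)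
    (hS₀gen : GeneratesTopology S₀)
    (BE : Gramian D.toOrderedStarData E) (BF : Gramian D.toOrderedStarData F)
    (hE : BE.IsVETopology S₀) (hF : BF.IsVETopology S₀)
    (hquotbar : ∀ p ∈ S₀, ∀ N : Submodule ℂ E, (N : Set E) = {x : E | BE.tilde p x = 0} →
      ∀ nq : (E ⧸ N) → ℝ, (∀ x : E, nq (Submodule.Quotient.mk x) = BE.tilde p x) →
        BarrelledWrtNorm nq)
    (T : E →ₗ[ℂ] F) (hT : BE.Adjointable BF T) :
    ∀ p ∈ S₀, ∃ C : ℝ, 0 ≤ C ∧ ∀ x : E, BF.tilde p (T x) ≤ C * BE.tilde p x := by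
  intro p hp
  obtain ⟨S, hS⟩ := hT
  obtain ⟨hneE, qE, hqE, -⟩ := hE
  obtain ⟨hneF, qF, hqF, -⟩ := hF
  obtain ⟨hpc, hpinc, hpstar⟩ := hS₀ p hp
  set pe : Seminorm ℂ E := qE ⟨p, hp⟩ with hpe_def
  set pf : Seminorm ℂ F := qF ⟨p, hp⟩ with hpf_def
  have hpe : ∀ x : E, pe x = BE.tilde p x := hqE ⟨p, hp⟩
  have hpf : ∀ y : F, pf y = BF.tilde p y := hqF ⟨p, hp⟩
  -- basic facts about tilde
  have tilde_nonnegE : ∀ x : E, 0 ≤ BE.tilde p x := fun x => Real.sqrt_nonneg _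
  have tilde_nonnegF : ∀ y : F, 0 ≤ BF.tilde p y := fun y => Real.sqrt_nonneg _
  have tilde_smulE : ∀ (c : ℂ) (x : E), BE.tilde p (c • x) = ‖c‖ * BE.tilde p x := by
    intro c x
    rw [← hpe, ← hpe, map_smul_eq_mul]
  have tilde_smulF : ∀ (c : ℂ) (y : F), BF.tilde p (c • y) = ‖c‖ * BF.tilde p y := by
    intro c y
    rw [← hpf, ← hpf, map_smul_eq_mul]
  have tilde_sqF : ∀ y : F, (BF.tilde p y) ^ 2 = p (BF.inner y y) := fun y =>
    Real.sq_sqrt (apply_nonneg p _)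
  -- the quotient
  set N : Submodule ℂ E := semKer pe with hNdef
  have memN : ∀ z : E, z ∈ N ↔ pe z = 0 := fun z => Iff.rfl
  have hN : (N : Set E) = {x : E | BE.tilde p x = 0} := by
    ext x
    simp only [SetLike.mem_coe, memN, Set.mem_setOf_eq, hpe]
  have tilde_congr : ∀ x x' : E, pe (x - x') = 0 → BE.tilde p x = BE.tilde p x' := by
    intro x x' h
    rw [← hpe, ← hpe]
    have h1 : pe x ≤ pe x' + pe (x - x') := by
      have := map_add_le_add pe x' (x - x')
      simpa using this
    have h2 : pe x' ≤ pe x + pe (x - x') := by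
      have := map_add_le_add pe x (x' - x)
      have hneg : pe (x' - x) = pe (x - x') := by
        rw [← neg_sub x x', map_neg_eq_map]
      simpa [hneg] using this
    have := apply_nonneg pe (x - x')
    linarith
  set nq : (E ⧸ N) → ℝ := fun m => BE.tilde p (Quotient.out m) with hnqdef
  have hmk_out : ∀ m : E ⧸ N, Submodule.Quotient.mk (Quotient.out m) = m := fun m =>
    Quotient.out_eq' m
  have hnq : ∀ x : E, nq (Submodule.Quotient.mk x) = BE.tilde p x := by
    intro x
    apply tilde_congr
    have h1 : (Submodule.Quotient.mk (Quotient.out (Submodule.Quotient.mk x : E ⧸ N)) :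
        E ⧸ N) = Submodule.Quotient.mk x := hmk_out _
    exact (memN _).mp ((Submodule.Quotient.eq N).mp h1)
  have hbar : BarrelledWrtNorm nq := hquotbar p hp N hN nq hnq
  -- the candidate barrel
  set P : E → Prop := fun x => ∀ y : F, BF.tilde p y ≤ 1 → p (BE.inner x (S y)) ≤ 1 with hPdef
  set s : Set (E ⧸ N) := {m | ∀ x : E, Submodule.Quotient.mk x = m → P x} with hsdef
  have Pcongr : ∀ x x' : E, pe (x - x') = 0 → P x' → P x := by
    intro x x' h hx' y hy
    have hdec : BE.inner x (S y) = BE.inner x' (S y) + BE.inner (x - x') (S y) := by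
      rw [← BE.inner_add_left']
      congr 1
      abel
    have hcs : p (BE.inner (x - x') (S y)) ≤ 4 * BE.tilde p (x - x') * BE.tilde p (S y) :=
      BE.cs hpinc _ _
    have hz : BE.tilde p (x - x') = 0 := by rw [← hpe]; exact h
    rw [hz] at hcs
    have h1 : p (BE.inner x (S y)) ≤ p (BE.inner x' (S y)) + p (BE.inner (x - x') (S y)) := by
      rw [hdec]; exact map_add_le_add p _ _
    have h2 := hx' y hy
    simp only [mul_zero, zero_mul] at hcs
    linarith
  have mem_s_iff : ∀ x : E, (Submodule.Quotient.mk x : E ⧸ N) ∈ s ↔ P x := by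
    intro x
    constructor
    · intro h; exact h x rfl
    · intro h x' hx'
      have : pe (x' - x) = 0 := (memN _).mp ((Submodule.Quotient.eq N).mp hx')
      · exact Pcongr x' x this h
  -- s is a barrel for nq
  have hclosed : ∀ m : E ⧸ N, (∀ ε : ℝ, 0 < ε → ∃ m' ∈ s, nq (m - m') < ε) → m ∈ s := by
    intro m hm x hxm y hy
    refine le_of_forall_pos_le_add' ?_
    intro ε hε
    set M : ℝ := 4 * BE.tilde p (S y) + 1 with hMdef
    have hM0 : 0 < M := by
      have := tilde_nonnegE (S y); rw [hMdef]; linarith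
    obtain ⟨m', hm's, hlt⟩ := hm (ε / M) (by positivity)
    set x' : E := Quotient.out m' with hx'def
    have hx' : Submodule.Quotient.mk x' = m' := hmk_out m'
    have hPx' : P x' := hm's x' hx'
    have hmk : (Submodule.Quotient.mk (x - x') : E ⧸ N) = m - m' := by
      rw [← hxm, ← hx']
      exact Submodule.Quotient.mk_sub N
    have hdist : BE.tilde p (x - x') < ε / M := by
      rw [← hnq (x - x'), hmk]; exact hlt
    have hcs : p (BE.inner (x - x') (S y)) ≤ 4 * BE.tilde p (x - x') * BE.tilde p (S y) :=
      BE.cs hpinc _ _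
    have hdec : p (BE.inner x (S y)) ≤ p (BE.inner x' (S y)) + p (BE.inner (x - x') (S y)) := by
      have : BE.inner x (S y) = BE.inner x' (S y) + BE.inner (x - x') (S y) := by
        rw [← BE.inner_add_left']; congr 1; abel
      rw [this]; exact map_add_le_add p _ _
    have h1 := hPx' y hy
    have h2 : 4 * BE.tilde p (x - x') * BE.tilde p (S y) ≤ ε := by
      have ht0 := tilde_nonnegE (x - x')
      have hsy := tilde_nonnegE (S y)
      have : BE.tilde p (x - x') * M < ε := (lt_div_iff₀ hM0).mp hdist
      nlinarith
    linarith
  have habs : Absorbent ℂ s := by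
    intro m
    rw [absorbs_iff_norm]
    set x₀ : E := Quotient.out m with hx₀def
    have hx₀ : Submodule.Quotient.mk x₀ = m := hmk_out m
    set M : ℝ := 4 * BF.tilde p (T x₀) + 1 with hMdef
    have hM1 : 1 ≤ M := by
      have := tilde_nonnegF (T x₀); rw [hMdef]; linarith
    have hM0 : 0 < M := by linarith
    refine ⟨M, fun c hc => ?_⟩
    have hc0 : c ≠ 0 := by
      intro h
      rw [h, norm_zero] at hc
      linarith
    intro z hz
    rw [Set.mem_singleton_iff] at hz
    rw [hz, Set.mem_smul_set_iff_inv_smul_mem₀ hc0]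
    have heq : c⁻¹ • m = (Submodule.Quotient.mk (c⁻¹ • x₀) : E ⧸ N) := by
      rw [← hx₀, Submodule.Quotient.mk_smul]
    rw [heq, mem_s_iff]
    intro y hy
    have e1 : BE.inner (c⁻¹ • x₀) (S y) = (starRingEnd ℂ) c⁻¹ • BE.inner x₀ (S y) :=
      BE.inner_smul_left' _ _ _
    have e2 : BE.inner x₀ (S y) = BF.inner (T x₀) y := (hS x₀ y).symm
    have hb : p (BF.inner (T x₀) y) ≤ M := by
      have := BF.cs hpinc (T x₀) y
      have h4 := tilde_nonnegF (T x₀)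
      nlinarith [tilde_nonnegF y]
    rw [e1, map_smul_eq_mul, e2]
    have hnormc : ‖(starRingEnd ℂ) c⁻¹‖ = ‖c‖⁻¹ := by
      rw [RCLike.norm_conj, norm_inv]
    rw [hnormc]
    have hcpos : 0 < ‖c‖ := by linarith
    calc ‖c‖⁻¹ * p (BF.inner (T x₀) y) ≤ ‖c‖⁻¹ * M := by
          apply mul_le_mul_of_nonneg_left hb (by positivity)
      _ ≤ ‖c‖⁻¹ * ‖c‖ := by
          apply mul_le_mul_of_nonneg_left hc (by positivity)
      _ = 1 := inv_mul_cancel₀ (ne_of_gt hcpos)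
  have hbal : Balanced ℂ s := by
    intro c hc z hz
    obtain ⟨m, hms, rfl⟩ := Set.mem_smul_set.mp hz
    set x₀ : E := Quotient.out m with hx₀def
    have hx₀ : Submodule.Quotient.mk x₀ = m := hmk_out m
    have heq : c • m = (Submodule.Quotient.mk (c • x₀) : E ⧸ N) := by
      rw [← hx₀, Submodule.Quotient.mk_smul]
    rw [heq, mem_s_iff]
    intro y hy
    have e1 : BE.inner (c • x₀) (S y) = (starRingEnd ℂ) c • BE.inner x₀ (S y) :=
      BE.inner_smul_left' _ _ _
    rw [e1, map_smul_eq_mul, RCLike.norm_conj]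
    have h1 : p (BE.inner x₀ (S y)) ≤ 1 := hms x₀ hx₀ y hy
    have h2 := apply_nonneg p (BE.inner x₀ (S y))
    nlinarith [norm_nonneg c]
  have hconv : Convex ℝ s := by
    intro m1 hm1 m2 hm2 a b ha hb hab
    set x1 : E := Quotient.out m1 with hx1def
    set x2 : E := Quotient.out m2 with hx2def
    have hx1 : Submodule.Quotient.mk x1 = m1 := hmk_out m1
    have hx2 : Submodule.Quotient.mk x2 = m2 := hmk_out m2
    have heq : a • m1 + b • m2
        = (Submodule.Quotient.mk (((a : ℝ) : ℂ) • x1 + ((b : ℝ) : ℂ) • x2) : E ⧸ N) := by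
      rw [← hx1, ← hx2, ← Submodule.Quotient.mk_smul N a x1, ← Submodule.Quotient.mk_smul N b x2,
        ← Submodule.Quotient.mk_add, Complex.coe_smul, Complex.coe_smul]
    rw [heq, mem_s_iff]
    intro y hy
    have e1 : BE.inner (((a : ℝ) : ℂ) • x1 + ((b : ℝ) : ℂ) • x2) (S y)
        = ((a : ℝ) : ℂ) • BE.inner x1 (S y) + ((b : ℝ) : ℂ) • BE.inner x2 (S y) := by
      rw [BE.inner_add_left', BE.inner_smul_left', BE.inner_smul_left']
      simp [Complex.conj_ofReal]
    rw [e1]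
    have h1 : p (BE.inner x1 (S y)) ≤ 1 := hm1 x1 hx1 y hy
    have h2 : p (BE.inner x2 (S y)) ≤ 1 := hm2 x2 hx2 y hy
    calc p (((a : ℝ) : ℂ) • BE.inner x1 (S y) + ((b : ℝ) : ℂ) • BE.inner x2 (S y))
        ≤ p (((a : ℝ) : ℂ) • BE.inner x1 (S y)) + p (((b : ℝ) : ℂ) • BE.inner x2 (S y)) :=
          map_add_le_add p _ _
      _ = ‖((a : ℝ) : ℂ)‖ * p (BE.inner x1 (S y)) + ‖((b : ℝ) : ℂ)‖ * p (BE.inner x2 (S y)) := by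
          rw [map_smul_eq_mul, map_smul_eq_mul]
      _ ≤ a * 1 + b * 1 := by
          have ha' : ‖((a : ℝ) : ℂ)‖ = a := by
            rw [Complex.norm_real]; exact abs_of_nonneg ha
          have hb' : ‖((b : ℝ) : ℂ)‖ = b := by
            rw [Complex.norm_real]; exact abs_of_nonneg hb
          rw [ha', hb']
          have := apply_nonneg p (BE.inner x1 (S y))
          have := apply_nonneg p (BE.inner x2 (S y))
          nlinarith
      _ = 1 := by rw [mul_one, mul_one, hab]
  -- apply barrelledness
  have hisb : IsBarrelWrtNorm nq s := by
    refine ⟨?_, habs, hbal, hconv⟩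
    intro m hm
    exact hclosed m (fun ε hε => by
      obtain ⟨y0, hy0, hlt⟩ := hm ε hε
      exact ⟨y0, hy0, by simpa [sub_eq_add_neg] using hlt⟩)
  obtain ⟨ε, hε, hεs⟩ := hbar s hisb
  -- derive the bound
  have normr : ∀ r : ℝ, 0 ≤ r → ‖((r : ℝ) : ℂ)‖ = r := fun r hr => by
    rw [Complex.norm_real]; exact abs_of_nonneg hr
  have claim1 : ∀ x : E, BE.tilde p x < ε → BF.tilde p (T x) ≤ 1 := by
    intro x hx
    have hmem : (Submodule.Quotient.mk x : E ⧸ N) ∈ s := by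
      apply hεs
      rw [hnq]; exact hx
    have hPx : P x := hmem x rfl
    have hβ0 := tilde_nonnegF (T x)
    rcases eq_or_lt_of_le hβ0 with hβz | hβpos
    · linarith
    · have hβinv : (0:ℝ) ≤ (BF.tilde p (T x))⁻¹ := inv_nonneg.mpr hβ0
      have hy1 : BF.tilde p ((((BF.tilde p (T x))⁻¹ : ℝ) : ℂ) • T x) = 1 := by
        rw [tilde_smulF, normr _ hβinv]
        exact inv_mul_cancel₀ (ne_of_gt hβpos)
      have h1 : p (BE.inner x (S ((((BF.tilde p (T x))⁻¹ : ℝ) : ℂ) • T x))) ≤ 1 :=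
        hPx _ (le_of_eq hy1)
      have e1 : BE.inner x (S ((((BF.tilde p (T x))⁻¹ : ℝ) : ℂ) • T x))
          = BF.inner (T x) ((((BF.tilde p (T x))⁻¹ : ℝ) : ℂ) • T x) := (hS x _).symm
      have e2 : BF.inner (T x) ((((BF.tilde p (T x))⁻¹ : ℝ) : ℂ) • T x)
          = (((BF.tilde p (T x))⁻¹ : ℝ) : ℂ) • BF.inner (T x) (T x) := BF.inner_smul_right _ _ _
      rw [e1, e2, map_smul_eq_mul, normr _ hβinv, ← tilde_sqF (T x)] at h1
      have heq : (BF.tilde p (T x))⁻¹ * BF.tilde p (T x) ^ 2 = BF.tilde p (T x) := by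
        field_simp
      rw [heq] at h1
      exact h1
  refine ⟨2 / ε, by positivity, ?_⟩
  intro x
  have hα0 := tilde_nonnegE x
  rcases eq_or_lt_of_le hα0 with hαz | hαpos
  · -- tilde x = 0
    have hTx0 : BF.tilde p (T x) ≤ 0 := by
      refine le_of_forall_pos_le_add' ?_
      intro ε' hε'
      have hr : (0:ℝ) < 2 / ε' := by positivity
      have hsc : BE.tilde p (((2 / ε' : ℝ) : ℂ) • x) < ε := by
        rw [tilde_smulE, ← hαz, mul_zero]
        exact hε
      have h1 := claim1 _ hsc
      rw [map_smul, tilde_smulF, normr _ hr.le] at h1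
      have h2 : BF.tilde p (T x) ≤ ε' / 2 := by
        rw [← le_div_iff₀' hr] at h1
        calc BF.tilde p (T x) ≤ 1 / (2 / ε') := h1
          _ = ε' / 2 := by rw [one_div_div]
      linarith
    have h3 := tilde_nonnegF (T x)
    have hTx : BF.tilde p (T x) = 0 := le_antisymm hTx0 h3
    rw [hTx, ← hαz, mul_zero]
  · -- tilde x > 0
    have hc0 : (0:ℝ) < ε / (2 * BE.tilde p x) := by positivity
    have hsc : BE.tilde p (((ε / (2 * BE.tilde p x) : ℝ) : ℂ) • x) < ε := by
      rw [tilde_smulE, normr _ hc0.le, div_mul_eq_mul_div, div_lt_iff₀ (by positivity)]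
      nlinarith
    have h1 := claim1 _ hsc
    rw [map_smul, tilde_smulF, normr _ hc0.le] at h1
    rw [← le_div_iff₀' hc0] at h1
    calc BF.tilde p (T x) ≤ 1 / (ε / (2 * BE.tilde p x)) := by
          simpa using h1
      _ = 2 / ε * BE.tilde p x := by
          rw [one_div_div]
          ring
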